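/- Let δ = (α+β+1-γ)/2 with Re(δ) < 1 and γ, δ ∉ ℤ, α/2, β/2 not nonpositive integers. Then 2·c⁺₁₂ = lim_{n→∞} Γ(2n+1)Γ(δ-1)/Γ(2n-1+δ) · (α/2)_n(β/2)_n/(n!((γ+1)/2)_n) where c⁺₁₂ = 2^(1-δ)Γ(δ-1)Γ((γ+1)/2)/(Γ(α/2)Γ(β/2)); i.e., the stated limit equals 2^(2-δ)Γ(δ-1)Γ((γ+1)/2)/(Γ(α/2)Γ(β/2)). -/

import Mathlib

open Complex Filter Finset Nat

private lemma myGamma_add_nat (s : ℂ) (hs : ∀ k : ℕ, s + k ≠ 0) (n : ℕ) :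
    Complex.Gamma (s + n) = (∏ k ∈ Finset.range n, (s + k)) * Complex.Gamma s := by
  induction n with
  | zero => simp
  | succ n ih =>
    have h1 : s + ((n + 1 : ℕ) : ℂ) = (s + n) + 1 := by push_cast; ring
    rw [h1, Complex.Gamma_add_one _ (hs n), Finset.prod_range_succ, ih]; ring

private lemma my_cpow_ne_zero {x : ℂ} (y : ℂ) (hx : x ≠ 0) : x ^ y ≠ 0 := by
  rw [Complex.cpow_def_of_ne_zero hx]; exact Complex.exp_ne_zero _

set_option maxHeartbeats 2000000 in
/-- The connection coefficient as a limit of normalized Taylor coefficients: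
`Γ(2n+1)Γ(δ-1)/Γ(2n-1+δ) · (α/2)_n(β/2)_n/(n!((γ+1)/2)_n)` converges to
`2·c⁺₁₂ = 2^(2-δ) Γ(δ-1) Γ((γ+1)/2)/(Γ(α/2)Γ(β/2))`, where `δ = (α+β+1-γ)/2`. -/
theorem stmt19 (α β γ δ : ℂ) (hδ : δ = (α + β + 1 - γ) / 2) (hδ1 : δ.re < 1)
    (hγZ : ¬ ∃ m : ℤ, γ = (m : ℂ)) (hδZ : ¬ ∃ m : ℤ, δ = (m : ℂ))
    (hα : ∀ m : ℕ, α / 2 ≠ -(m : ℂ)) (hβ : ∀ m : ℕ, β / 2 ≠ -(m : ℂ)) :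
    Tendsto (fun n : ℕ =>
        Complex.Gamma (2 * (n : ℂ) + 1) * Complex.Gamma (δ - 1) /
            Complex.Gamma (2 * (n : ℂ) - 1 + δ) *
          ((∏ i ∈ Finset.range n, (α / 2 + (i : ℂ))) *
              (∏ i ∈ Finset.range n, (β / 2 + (i : ℂ))) /
            ((n ! : ℂ) * ∏ i ∈ Finset.range n, ((γ + 1) / 2 + (i : ℂ)))))
      atTop
      (nhds (2 * ((2 : ℂ) ^ ((1 : ℂ) - δ) * Complex.Gamma (δ - 1) *
        Complex.Gamma ((γ + 1) / 2) / (Complex.Gamma (α / 2) * Complex.Gamma (β / 2))))) := by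
  set a : ℂ := α / 2 with ha_def
  set b : ℂ := β / 2 with hb_def
  set c : ℂ := (γ + 1) / 2 with hc_def
  -- nonzero facts
  have ha : ∀ k : ℕ, a + (k : ℂ) ≠ 0 := by
    intro k h; exact hα k (by linear_combination h)
  have hb : ∀ k : ℕ, b + (k : ℂ) ≠ 0 := by
    intro k h; exact hβ k (by linear_combination h)
  have hc : ∀ k : ℕ, c + (k : ℂ) ≠ 0 := by
    intro k h
    exact hγZ ⟨-1 - 2 * k, by push_cast; linear_combination 2 * h⟩
  have hd : ∀ k : ℕ, (δ - 1) + (k : ℂ) ≠ 0 := by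
    intro k h
    exact hδZ ⟨1 - k, by push_cast; linear_combination h⟩
  have hΓd : Complex.Gamma (δ - 1) ≠ 0 := by
    apply Complex.Gamma_ne_zero; intro m h; exact hd m (by rw [h]; ring)
  have hΓa : Complex.Gamma a ≠ 0 := Complex.Gamma_ne_zero hα
  have hΓb : Complex.Gamma b ≠ 0 := Complex.Gamma_ne_zero hβ
  have habc : a + b = c + (δ - 1) := by rw [hδ, ha_def, hb_def, hc_def]; ring
  clear_value a b c
  -- the auxiliary sequence
  set R : ℕ → ℂ := fun n =>
    Complex.GammaSeq (δ - 1) (2 * n) *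
      (Complex.GammaSeq c n / (Complex.GammaSeq a n * Complex.GammaSeq b n)) *
      ((2 : ℂ) ^ ((1 : ℂ) - δ) *
        ((((δ - 1) * ((n : ℂ))⁻¹ + 2) * (c * ((n : ℂ))⁻¹ + 1)) /
          (((a * ((n : ℂ))⁻¹ + 1)) * ((b * ((n : ℂ))⁻¹ + 1))))) with hR
  have h2n : Tendsto (fun n : ℕ => 2 * n) atTop atTop := by
    apply tendsto_atTop_mono (fun n : ℕ => ?_) tendsto_id
    simp only [id_eq]; omega
  have hinv : Tendsto (fun n : ℕ => ((n : ℂ))⁻¹) atTop (nhds 0) :=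
    tendsto_inv_atTop_nhds_zero_nat (𝕜 := ℂ)
  have hL1 : Tendsto (fun n : ℕ => Complex.GammaSeq (δ - 1) (2 * n)) atTop
      (nhds (Complex.Gamma (δ - 1))) :=
    (Complex.GammaSeq_tendsto_Gamma (δ - 1)).comp h2n
  have hL2 : Tendsto (fun n : ℕ =>
      Complex.GammaSeq c n / (Complex.GammaSeq a n * Complex.GammaSeq b n)) atTop
      (nhds (Complex.Gamma c / (Complex.Gamma a * Complex.Gamma b))) :=
    (Complex.GammaSeq_tendsto_Gamma c).div
      ((Complex.GammaSeq_tendsto_Gamma a).mul (Complex.GammaSeq_tendsto_Gamma b))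
      (mul_ne_zero hΓa hΓb)
  have hL3 : Tendsto (fun n : ℕ =>
      (2 : ℂ) ^ ((1 : ℂ) - δ) *
        ((((δ - 1) * ((n : ℂ))⁻¹ + 2) * (c * ((n : ℂ))⁻¹ + 1)) /
          (((a * ((n : ℂ))⁻¹ + 1)) * ((b * ((n : ℂ))⁻¹ + 1))))) atTop
      (nhds ((2 : ℂ) ^ ((1 : ℂ) - δ) * 2)) := by
    have hnum : Tendsto (fun n : ℕ => ((δ - 1) * ((n : ℂ))⁻¹ + 2) * (c * ((n : ℂ))⁻¹ + 1))
        atTop (nhds 2) := by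
      have := (((tendsto_const_nhds (x := δ - 1)).mul hinv).add
          (tendsto_const_nhds (x := (2 : ℂ)))).mul
        (((tendsto_const_nhds (x := c)).mul hinv).add (tendsto_const_nhds (x := (1 : ℂ))))
      simpa using this
    have hden : Tendsto (fun n : ℕ => (a * ((n : ℂ))⁻¹ + 1) * (b * ((n : ℂ))⁻¹ + 1))
        atTop (nhds 1) := by
      have := (((tendsto_const_nhds (x := a)).mul hinv).add
          (tendsto_const_nhds (x := (1 : ℂ)))).mul
        (((tendsto_const_nhds (x := b)).mul hinv).add (tendsto_const_nhds (x := (1 : ℂ))))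
      simpa using this
    have := (tendsto_const_nhds (x := (2 : ℂ) ^ ((1 : ℂ) - δ)) (f := atTop (α := ℕ))).mul
      (hnum.div hden one_ne_zero)
    simpa using this
  have hRlim : Tendsto R atTop (nhds (Complex.Gamma (δ - 1) *
      (Complex.Gamma c / (Complex.Gamma a * Complex.Gamma b)) *
      ((2 : ℂ) ^ ((1 : ℂ) - δ) * 2))) := (hL1.mul hL2).mul hL3
  have hvals : (2 : ℂ) * ((2 : ℂ) ^ ((1 : ℂ) - δ) * Complex.Gamma (δ - 1) *
        Complex.Gamma c / (Complex.Gamma a * Complex.Gamma b)) =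
      Complex.Gamma (δ - 1) * (Complex.Gamma c / (Complex.Gamma a * Complex.Gamma b)) *
      ((2 : ℂ) ^ ((1 : ℂ) - δ) * 2) := by ring
  rw [hvals]
  apply hRlim.congr'
  rw [eventuallyEq_iff_exists_mem]
  refine ⟨{n | 1 ≤ n}, mem_atTop 1, fun n hn => ?_⟩
  have hn1 : 1 ≤ n := hn
  have hN : ((n : ℂ)) ≠ 0 := Nat.cast_ne_zero.mpr (by omega)
  -- rewrite the Gamma factors
  have hΓ1 : Complex.Gamma (2 * (n : ℂ) + 1) = ((2 * n)! : ℂ) := by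
    rw [show (2 * (n : ℂ) + 1) = ((2 * n : ℕ) : ℂ) + 1 by push_cast; ring,
      Complex.Gamma_nat_eq_factorial]
  have hΓ2 : Complex.Gamma (2 * (n : ℂ) - 1 + δ) =
      (∏ k ∈ Finset.range (2 * n), ((δ - 1) + (k : ℂ))) * Complex.Gamma (δ - 1) := by
    rw [show (2 * (n : ℂ) - 1 + δ) = (δ - 1) + ((2 * n : ℕ) : ℂ) by push_cast; ring,
      myGamma_add_nat _ hd]
  -- power identities
  have hpow2 : ((2 : ℂ)) ^ (δ - 1) = ((2 : ℂ) ^ ((1 : ℂ) - δ))⁻¹ := by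
    apply eq_inv_of_mul_eq_one_left
    rw [← Complex.cpow_add _ _ (two_ne_zero), show (δ - 1) + ((1 : ℂ) - δ) = 0 by ring,
      Complex.cpow_zero]
  have hpowN : ((n : ℂ)) ^ (δ - 1) = ((n : ℂ)) ^ a * ((n : ℂ)) ^ b / ((n : ℂ)) ^ c := by
    rw [eq_div_iff (my_cpow_ne_zero c hN), ← Complex.cpow_add _ _ hN,
      ← Complex.cpow_add _ _ hN, add_comm (δ - 1) c, ← habc]
  have hpow2n : (((2 * n : ℕ) : ℂ)) ^ (δ - 1) = (2 : ℂ) ^ (δ - 1) * ((n : ℂ)) ^ (δ - 1) := by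
    rw [Nat.cast_mul]
    have := Complex.natCast_mul_natCast_cpow 2 n (δ - 1)
    simpa using this
  -- unfold and prove the algebraic identity
  simp only [Set.mem_setOf_eq]
  rw [hR]
  simp only [Complex.GammaSeq]
  rw [hΓ1, hΓ2, Finset.prod_range_succ (fun j : ℕ => (δ - 1) + (j : ℂ)),
    Finset.prod_range_succ (fun j : ℕ => a + (j : ℂ)),
    Finset.prod_range_succ (fun j : ℕ => b + (j : ℂ)),
    Finset.prod_range_succ (fun j : ℕ => c + (j : ℂ)),
    hpow2n, hpow2, hpowN]
  have hpa : (∏ i ∈ Finset.range n, (a + (i : ℂ))) ≠ 0 :=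
    Finset.prod_ne_zero_iff.mpr fun i _ => ha i
  have hpb : (∏ i ∈ Finset.range n, (b + (i : ℂ))) ≠ 0 :=
    Finset.prod_ne_zero_iff.mpr fun i _ => hb i
  have hpc : (∏ i ∈ Finset.range n, (c + (i : ℂ))) ≠ 0 :=
    Finset.prod_ne_zero_iff.mpr fun i _ => hc i
  have hpd : (∏ k ∈ Finset.range (2 * n), ((δ - 1) + (k : ℂ))) ≠ 0 :=
    Finset.prod_ne_zero_iff.mpr fun i _ => hd i
  have hfn : ((n ! : ℕ) : ℂ) ≠ 0 := Nat.cast_ne_zero.mpr (Nat.factorial_ne_zero n)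
  have hf2n : (((2 * n)! : ℕ) : ℂ) ≠ 0 := Nat.cast_ne_zero.mpr (Nat.factorial_ne_zero _)
  have hNa : ((n : ℂ)) ^ a ≠ 0 := my_cpow_ne_zero a hN
  have hNb : ((n : ℂ)) ^ b ≠ 0 := my_cpow_ne_zero b hN
  have hNc : ((n : ℂ)) ^ c ≠ 0 := my_cpow_ne_zero c hN
  have ht : ((2 : ℂ) ^ ((1 : ℂ) - δ)) ≠ 0 := my_cpow_ne_zero _ two_ne_zero
  have hA : a + (n : ℂ) ≠ 0 := ha n
  have hB : b + (n : ℂ) ≠ 0 := hb n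
  have hC : c + (n : ℂ) ≠ 0 := hc n
  have hD : (δ - 1) + ((2 * n : ℕ) : ℂ) ≠ 0 := hd (2 * n)
  have hcast2n : ((2 * n : ℕ) : ℂ) = 2 * (n : ℂ) := by push_cast; ring
  rw [hcast2n] at hD ⊢
  field_simp
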